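/- Let α and β be real numbers with 0 < α, 0 ≤ β, and α + β < 1, and define f(x) = (1 − α − β)/x + α·(1 + 1/x)·ln(1 + x) for x > 0. If x* > 0 satisfies x* − ln(1 + x*) = (1 − α − β)/α, then for every y > 0 it holds that f(y) ≥ f(x*). -/

import Mathlib

open Real

theorem stmt_9 (α β xs : ℝ) (hα : 0 < α) (hβ : 0 ≤ β) (hαβ : α + β < 1)
    (hxs : 0 < xs) (hcrit : xs - Real.log (1 + xs) = (1 - α - β) / α) :
    ∀ y : ℝ, 0 < y →
      (1 - α - β) / y + α * (1 + 1 / y) * Real.log (1 + y) ≥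
        (1 - α - β) / xs + α * (1 + 1 / xs) * Real.log (1 + xs) := by
  intro y hy
  set L := Real.log (1 + xs) with hL
  set M := Real.log (1 + y) with hM
  have h1y : (0:ℝ) < 1 + y := by linarith
  have h1xs : (0:ℝ) < 1 + xs := by linarith
  have hc : 1 - α - β = α * (xs - L) := by
    field_simp at hcrit
    linarith
  have key : L - M ≤ (1 + xs) / (1 + y) - 1 := by
    have hpos : (0:ℝ) < (1 + xs) / (1 + y) := by positivity
    have h := Real.log_le_sub_one_of_pos hpos
    rwa [Real.log_div (ne_of_gt h1xs) (ne_of_gt h1y)] at h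
  have key2 : (L - M) * (1 + y) ≤ xs - y := by
    have h := mul_le_mul_of_nonneg_right key (le_of_lt h1y)
    have heq : ((1 + xs) / (1 + y) - 1) * (1 + y) = xs - y := by
      field_simp
      ring
    linarith [heq ▸ h]
  rw [ge_iff_le, ← sub_nonneg, hc]
  have eq1 : α * (xs - L) / y + α * (1 + 1 / y) * M -
      (α * (xs - L) / xs + α * (1 + 1 / xs) * L)
      = α / y * ((xs - y) - (L - M) * (1 + y)) := by
    field_simp
    ring
  rw [eq1]
  have : (0:ℝ) ≤ α / y := by positivity
  nlinarith [key2]
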